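/- Let d be a positive odd integer divisible by 3, let r be a positive odd integer, and let a and b be fixed integers with a ≡ 1 (mod 12) and b = 2^d * a - 3^r. If integers x, y, z satisfy a*x^d - y^2 - z^2 + x*y*z - b = 0, then x ≡ 5 (mod 12). -/

import Mathlib

private lemma zmod12_pow5 : ∀ t : ZMod 12, t ^ 5 = t ^ 3 := by decide

private lemma zmod12_pow (t : ZMod 12) : ∀ k : ℕ, t ^ (2 * k + 3) = t ^ 3 := by
  intro k
  induction k with
  | zero => rfl
  | succ k ih =>
    have : 2 * (k + 1) + 3 = (2 * k + 3) + 2 := by ring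
    rw [this, pow_add, ih, ← pow_add]
    exact zmod12_pow5 t

private lemma zmod12_three_pow : ∀ j : ℕ, (3 : ZMod 12) ^ (2 * j + 1) = 3 := by
  intro j
  induction j with
  | zero => rfl
  | succ j ih =>
    have : 2 * (j + 1) + 1 = (2 * j + 1) + 2 := by ring
    rw [this, pow_add, ih]
    decide

private lemma zmod12_main : ∀ X Y Z : ZMod 12,
    X ^ 3 - Y ^ 2 - Z ^ 2 + X * Y * Z - (8 - 3) = 0 → X = 5 ∨ X = 9 := by decide

theorem solution_implies_x_five_mod_twelve (d : ℕ) (hd : 0 < d) (hodd : Odd d)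
    (h3 : 3 ∣ d) (r : ℕ) (hr : 0 < r) (hrodd : Odd r)
    (a b : ℤ) (ha : a % 12 = 1) (hb : b = 2 ^ d * a - 3 ^ r)
    (x y z : ℤ) (h : a * x ^ d - y ^ 2 - z ^ 2 + x * y * z - b = 0) :
    x % 12 = 5 := by
  subst hb
  obtain ⟨m, hm⟩ := hodd
  obtain ⟨j, hj⟩ := hrodd
  -- Part A : mod 12 analysis
  have haz : (a : ZMod 12) = 1 := by
    have h1 : a ≡ 1 [ZMOD 12] := by
      show a % 12 = 1 % 12; omega
    have := (ZMod.intCast_eq_intCast_iff a 1 12).mpr h1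
    simpa using this
  have h12 := congrArg (fun t : ℤ => (t : ZMod 12)) h
  push_cast at h12
  rw [show d = 2 * (m - 1) + 3 by omega] at h12
  rw [zmod12_pow, zmod12_pow] at h12
  rw [show r = 2 * j + 1 by omega, zmod12_three_pow, haz] at h12
  have h13 : (x : ZMod 12) ^ 3 - (y:ZMod 12) ^ 2 - (z:ZMod 12) ^ 2
      + (x:ZMod 12) * (y:ZMod 12) * (z:ZMod 12) - (8 - 3) = 0 := by
    have h8 : (2 : ZMod 12) ^ 3 = 8 := by decide
    rw [h8] at h12
    linear_combination h12
  have hA := zmod12_main _ _ _ h13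
  rcases hA with hA | hA
  · have h5 : (x : ZMod 12) = ((5 : ℤ) : ZMod 12) := by exact_mod_cast hA
    have := (ZMod.intCast_eq_intCast_iff x 5 12).mp h5
    have hx : x % 12 = 5 % 12 := this
    omega
  -- Part B : rule out x ≡ 9 (mod 12)
  exfalso
  have h9 : (x : ZMod 12) = ((9 : ℤ) : ZMod 12) := by exact_mod_cast hA
  have hx9' := (ZMod.intCast_eq_intCast_iff x 9 12).mp h9
  have hx9 : x % 12 = 9 % 12 := hx9'
  obtain ⟨c, hc⟩ := sub_dvd_pow_sub_pow x 2 d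
  set n := x - 2 with hn
  have hn7 : n % 12 = 7 := by omega
  have key : n ∣ (y - z) ^ 2 - 3 ^ r := ⟨a * c + y * z, by linear_combination a * hc - h⟩
  set N := n.natAbs with hNdef
  have hNn := Int.natAbs_eq n
  have hN : N % 12 = 7 ∨ N % 12 = 5 := by rcases hNn with h' | h' <;> omega
  have hNo : Odd N := by rcases hN with h' | h' <;> exact Nat.odd_iff.mpr (by omega)
  have hdvdN : (N : ℤ) ∣ (y - z) ^ 2 - 3 ^ r := Int.natAbs_dvd.mpr key
  have hmodeq : (3 : ℤ) ^ r % (N : ℤ) = (y - z) ^ 2 % (N : ℤ) :=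
    Int.modEq_iff_dvd.mpr hdvdN
  have h3N : ¬ (3 ∣ N) := by omega
  -- gcd (y - z) N = 1
  have hgy : Int.gcd (y - z) (N : ℤ) = 1 := by
    by_contra hg
    obtain ⟨p, pp, hpg⟩ := Nat.exists_prime_and_dvd hg
    have hpgz : (p : ℤ) ∣ (Int.gcd (y - z) (N : ℤ) : ℤ) := Int.natCast_dvd_natCast.mpr hpg
    have hpyz : (p : ℤ) ∣ (y - z) := hpgz.trans (Int.gcd_dvd_left _ _)
    have hpN : (p : ℤ) ∣ (N : ℤ) := hpgz.trans (Int.gcd_dvd_right _ _)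
    have h1 : (p : ℤ) ∣ (y - z) ^ 2 := dvd_pow hpyz two_ne_zero
    have h2 : (p : ℤ) ∣ (y - z) ^ 2 - ((y - z) ^ 2 - 3 ^ r) := dvd_sub h1 (hpN.trans hdvdN)
    rw [sub_sub_cancel] at h2
    have h2' : p ∣ 3 ^ r := by exact_mod_cast h2
    have hp3 : p = 3 := (Nat.prime_dvd_prime_iff_eq pp Nat.prime_three).mp (pp.dvd_of_dvd_pow h2')
    subst hp3
    have : 3 ∣ N := Int.natCast_dvd_natCast.mp hpN
    exact h3N this
  have hg3 : Int.gcd (3 : ℤ) (N : ℤ) = 1 := by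
    have : Nat.Coprime 3 N := (Nat.Prime.coprime_iff_not_dvd Nat.prime_three).mpr h3N
    simpa [Int.gcd] using this
  have h1 : jacobiSym ((y - z) ^ 2) N = 1 := jacobiSym.sq_one' hgy
  have h2 : jacobiSym ((3 : ℤ) ^ r) N = 1 := by
    rw [jacobiSym.mod_left' hmodeq]; exact h1
  rw [jacobiSym.pow_left] at h2
  have h4 : jacobiSym 3 N = 1 := by
    rcases jacobiSym.eq_one_or_neg_one hg3 with he | he
    · exact he
    · rw [he, Odd.neg_one_pow ⟨j, by omega⟩] at h2
      norm_num at h2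
  have h5 : jacobiSym 3 N = jacobiSym 3 (N % 12) := by
    have := jacobiSym.mod_right' 3 hNo
    norm_num at this
    exact this
  rw [h4] at h5
  rcases hN with hc7 | hc5
  · rw [hc7] at h5; norm_num at h5
  · rw [hc5] at h5; norm_num at h5
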